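/- Let ℙ_Λ be the set of perfect paths in a monomial algebra Λ, partially ordered by p ⪯ q iff p is a left divisor of q. Then in the Hasse quiver H(ℙ_Λ, ⪯), every vertex has at most one direct predecessor and at most one direct successor; consequently H(ℙ_Λ, ⪯) is a disjoint union of Dynkin quivers of type A. -/

import Mathlib

/-! Combinatorial model of a monomial algebra `Λ = KQ/I`.

A finite quiver is given by source and target maps on a type of arrows.
A (nontrivial) path is encoded as a nonempty list of composable arrows;
the admissible monomial ideal `I` is encoded by its set `F` of minimal
generating paths, and a path is zero in `Λ` iff it contains a member of
`F` as a contiguous subpath (infix). -/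

/-- A quiver structure on arrow type `E` with vertex type `V`. -/
structure QuiverData (V E : Type) where
  src : E → V
  tgt : E → V

namespace QuiverData

variable {V E : Type} (Q : QuiverData V E)

/-- `l` is the list of arrows of a path of `Q`. -/
def IsPath (l : List E) : Prop := l.Chain' fun a b => Q.tgt a = Q.src b

/-- Two paths are composable: the target of the first equals the source of
the second (vacuously true if one of them is trivial). -/
def Composable (l m : List E) : Prop :=
  ∀ a ∈ l.getLast?, ∀ b ∈ m.head?, Q.tgt a = Q.src b

end QuiverData

/-- A monomial algebra, encoded combinatorially: a finite quiver together with
the set `F` of minimal paths generating the admissible monomial ideal `I`. -/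
structure MonomialData (V E : Type) extends QuiverData V E where
  F : Set (List E)
  F_path : ∀ f ∈ F, toQuiverData.IsPath f
  F_len : ∀ f ∈ F, 2 ≤ f.length
  F_min : ∀ f ∈ F, ∀ g, g <:+: f → (∃ f' ∈ F, f' <:+: g) → g = f
  admissible : ∃ N, ∀ l, toQuiverData.IsPath l → N ≤ l.length → ∃ f ∈ F, f <:+: l

namespace MonomialData

variable {V E : Type} (M : MonomialData V E)

/-- The path `l` is zero in `Λ`. -/
def IsZero (l : List E) : Prop := ∃ f ∈ M.F, f <:+: l

/-- `l` is a path which is nonzero in `Λ`. -/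
def Nonzero (l : List E) : Prop := M.toQuiverData.IsPath l ∧ ¬ M.IsZero l

/-- A perfect pair of nonzero nontrivial paths, after Chen–Shen–Zhou. -/
def PerfectPair (p q : List E) : Prop :=
  p ≠ [] ∧ q ≠ [] ∧ M.Nonzero p ∧ M.Nonzero q ∧
  M.toQuiverData.Composable p q ∧ M.IsZero (p ++ q) ∧
  (∀ q', q' ≠ [] → M.Nonzero q' → M.toQuiverData.Composable p q' →
      M.IsZero (p ++ q') → q <+: q') ∧
  (∀ p', p' ≠ [] → M.Nonzero p' → M.toQuiverData.Composable p' q →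
      M.IsZero (p' ++ q) → p <:+ p')

/-- A perfect path: a path appearing in a perfect path sequence
`(p₁, …, pₙ, pₙ₊₁ = p₁)`, encoded by a periodic sequence of paths each of
whose consecutive pairs is perfect. -/
def IsPerfect (p : List E) : Prop :=
  ∃ (n : ℕ) (s : ℕ → List E), 0 < n ∧ s 0 = p ∧ (∀ i, s (i + n) = s i) ∧
    ∀ i, M.PerfectPair (s i) (s (i + 1))

/-- `c` is the underlying cycle associated with the perfect path `p`:
the shortest cycle `c` with `p₁ ⋯ pₙ = cˡ` for some `l > 0`, for a perfect
path sequence through `p`. -/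
def IsUnderlyingCycleOf (c p : List E) : Prop :=
  ∃ (n : ℕ) (s : ℕ → List E), 0 < n ∧ s 0 = p ∧ (∀ i, s (i + n) = s i) ∧
    (∀ i, M.PerfectPair (s i) (s (i + 1))) ∧
    (∃ l, 0 < l ∧ ((List.range n).map s).flatten = (List.replicate l c).flatten) ∧
    (∀ c' l', 0 < l' → ((List.range n).map s).flatten = (List.replicate l' c').flatten →
      c.length ≤ c'.length)


/-- There is an overlap between the perfect paths `p` and `q` (`p` overlaps `q`). -/
def Overlap (p q : List E) : Prop :=
  ∃ x p' q' : List E, x ≠ [] ∧ p = p' ++ x ∧ q = x ++ q' ∧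
    M.Nonzero (p' ++ x ++ q') ∧ (p = q → p' ≠ [] ∧ q' ≠ [])

/-- An elementary perfect path: a source in the Hasse quiver of the left
divisibility order `⪯` on perfect paths, i.e. it is not a proper left divisor
of any perfect path. -/
def Elementary (p : List E) : Prop :=
  M.IsPerfect p ∧ ¬ ∃ q, M.IsPerfect q ∧ p <+: q ∧ p ≠ q

/-- A co-elementary perfect path: a sink in the Hasse quiver of `⪯`, i.e.
no proper left divisor of it is perfect. -/
def CoElementary (p : List E) : Prop :=
  M.IsPerfect p ∧ ¬ ∃ q, M.IsPerfect q ∧ q <+: p ∧ q ≠ p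

/-- There is an arrow `q ⟶ p` in the Hasse quiver of `(ℙ_Λ, ⪯)`:
`p ≺ q` and no perfect path lies strictly between them. -/
def HasseArrowPrec (q p : List E) : Prop :=
  M.IsPerfect p ∧ M.IsPerfect q ∧ p <+: q ∧ p ≠ q ∧
    ¬ ∃ r, M.IsPerfect r ∧ p <+: r ∧ p ≠ r ∧ r <+: q ∧ r ≠ q

end MonomialData

/-- Two cycles are equivalent (agree up to cyclic permutation): each is a
subpath of a power of the other. -/
def CyclesEquiv {E : Type} (c d : List E) : Prop :=
  ∃ m k, 0 < m ∧ 0 < k ∧ c <:+: (List.replicate m d).flatten ∧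
    d <:+: (List.replicate k c).flatten



namespace MonomialData

variable {V E : Type} (M : MonomialData V E)

lemma nonzero_of_infix {l m : List E} (hl : M.Nonzero l) (hm : m <:+: l) :
    M.Nonzero m :=
  ⟨List.IsChain.infix hl.1 hm, fun ⟨f, hf, hfi⟩ => hl.2 ⟨f, hf, hfi.trans hm⟩⟩

lemma exists_pair {q : List E} (hq : M.IsPerfect q) : ∃ y, M.PerfectPair q y := by
  obtain ⟨n, s, hn, hs0, hper, hpp⟩ := hq
  exact ⟨s 1, by rw [← hs0]; exact hpp 0⟩

lemma extension {p z q : List E} (hpz : M.PerfectPair p z) (hq : M.IsPerfect q)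
    (hpre : p <+: q) (hne : p ≠ q) : ∃ t, q = p ++ t ∧ t <+: z := by
  obtain ⟨t, rfl⟩ := hpre
  have ht : t ≠ [] := by rintro rfl; simp at hne
  obtain ⟨hp_ne, hz_ne, hpnz, hznz, hcomp, hzero, hmin, _⟩ := hpz
  obtain ⟨y, hqy⟩ := M.exists_pair hq
  obtain ⟨hq_ne, hy_ne, hqnz, hynz, hcompqy, hzeroqy, hminy, hminy'⟩ := hqy
  refine ⟨t, rfl, ?_⟩
  have htnz : M.Nonzero t := M.nonzero_of_infix hqnz ⟨p, [], by simp⟩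
  by_cases hty : M.IsZero (t ++ y)
  · exfalso
    have hcompty : M.toQuiverData.Composable t y := by
      intro a ha b hb
      exact hcompqy a (by rwa [List.getLast?_append_of_ne_nil _ ht]) b hb
    have hsuf := hminy' t ht htnz hcompty hty
    have hlen := hsuf.length_le
    rw [List.length_append] at hlen
    have : p.length = 0 := by omega
    exact hp_ne (List.eq_nil_of_length_eq_zero this)
  · have hpath : M.toQuiverData.IsPath ((p ++ t) ++ y) :=
      List.isChain_append.2 ⟨hqnz.1, hynz.1, hcompqy⟩
    have htypath : M.toQuiverData.IsPath (t ++ y) :=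
      List.IsChain.infix hpath ⟨p, [], by simp [List.append_assoc]⟩
    have htynz : M.Nonzero (t ++ y) := ⟨htypath, hty⟩
    have hcompp : M.toQuiverData.Composable p (t ++ y) := by
      intro a ha b hb
      exact (List.isChain_append.1 hqnz.1).2.2 a ha b
        (by rwa [List.head?_append_of_ne_nil _ ht] at hb)
    have hz' : M.IsZero (p ++ (t ++ y)) := by
      rw [← List.append_assoc]; exact hzeroqy
    have hzpre : z <+: t ++ y := hmin (t ++ y) (by simp [ht]) htynz hcompp hz'
    have hznpre : ¬ z <+: t := by
      intro h
      obtain ⟨f, hf, hfi⟩ := hzero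
      exact hqnz.2 ⟨f, hf, hfi.trans ((List.prefix_append_right_inj p).2 h).isInfix⟩
    rcases List.prefix_or_prefix_of_prefix (show t <+: t ++ y from ⟨y, rfl⟩) hzpre with h | h
    · exact h
    · exact absurd h hznpre

end MonomialData

/-- in the Hasse quiver of `(ℙ_Λ, ⪯)` every vertex has at most
one direct predecessor and at most one direct successor; hence the Hasse
quiver is a disjoint union of Dynkin quivers of type `𝔸`. -/
theorem hasse_prec_local_structure {V E : Type} (M : MonomialData V E) :
    (∀ p q r : List E, M.HasseArrowPrec q p → M.HasseArrowPrec r p → q = r) ∧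
    (∀ p q r : List E, M.HasseArrowPrec p q → M.HasseArrowPrec p r → q = r) := by
  constructor
  · rintro p q r ⟨hpP, hqP, hpq, hpqne, hqmin⟩ ⟨-, hrP, hpr, hprne, hrmin⟩
    obtain ⟨z, hpz⟩ := M.exists_pair hpP
    obtain ⟨t, hqe, htz⟩ := M.extension hpz hqP hpq hpqne
    obtain ⟨u, hre, huz⟩ := M.extension hpz hrP hpr hprne
    by_contra hqr
    rcases List.prefix_or_prefix_of_prefix htz huz with h | h
    · exact hrmin ⟨q, hqP, hpq, hpqne,
        by rw [hqe, hre]; exact (List.prefix_append_right_inj p).2 h, hqr⟩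
    · exact hqmin ⟨r, hrP, hpr, hprne,
        by rw [hqe, hre]; exact (List.prefix_append_right_inj p).2 h,
        fun he => hqr he.symm⟩
  · rintro p q r ⟨hqP, hpP, hqp, hqpne, hqmin⟩ ⟨hrP, -, hrp, hrpne, hrmin⟩
    by_contra hqr
    rcases List.prefix_or_prefix_of_prefix hqp hrp with h | h
    · exact hqmin ⟨r, hrP, h, hqr, hrp, hrpne⟩
    · exact hrmin ⟨q, hqP, h, fun he => hqr he.symm, hqp, hqpne⟩
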